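/- Let G be the 8-cycle graph and H_G(x) = 1 + (7/2)x + (175/36)x² + (161/36)x³ + (35/18)x⁴ + (35/36)x⁵ + (7/36)x⁶ + (1/18)x⁷. Then H_G has a complex root with real part strictly less than −1; in particular, not all roots of H_G lie on the line Re(z) = −1/2. -/

import Mathlib

open Polynomial

noncomputable def eightCycleEhrhart : Polynomial ℂ :=
  Polynomial.C 1 + Polynomial.C (7/2 : ℂ) * Polynomial.X
    + Polynomial.C (175/36 : ℂ) * Polynomial.X ^ 2
    + Polynomial.C (161/36 : ℂ) * Polynomial.X ^ 3
    + Polynomial.C (35/18 : ℂ) * Polynomial.X ^ 4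
    + Polynomial.C (35/36 : ℂ) * Polynomial.X ^ 5
    + Polynomial.C (7/36 : ℂ) * Polynomial.X ^ 6
    + Polynomial.C (1/18 : ℂ) * Polynomial.X ^ 7

set_option maxHeartbeats 1000000 in
lemma eightCycle_key (w : ℂ) (h : 64*w^6 + 784*w^4 + 3052*w^2 + 1491 = 0) :
    eightCycleEhrhart.eval (-1/2 - w) = 0 := by
  simp only [eightCycleEhrhart, eval_add, eval_mul, eval_pow, eval_C, eval_X]
  linear_combination (-w/1152) * h

set_option maxHeartbeats 1000000 in
lemma eightCycle_aux (t : ℝ) (ht : 64*t^3+784*t^2+3052*t+1491 = 0)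
    (ht1 : -(57/100 : ℝ) < t) (ht2 : t < -(567/1000 : ℝ)) :
    ∃ z : ℂ, eightCycleEhrhart.eval z = 0 ∧ z.re < -1 := by
  set c : ℝ := -(49+4*t)/8 with hc
  set d2 : ℝ := 651/64 + 49/8*t + 3/4*t^2 with hd2def
  have hd2pos : 0 < d2 := by rw [hd2def]; nlinarith
  set m : ℝ := c^2 + d2 with hm
  have hmpos : 0 < m := by nlinarith [sq_nonneg c]
  set d : ℝ := Real.sqrt d2 with hdd
  have hd : d^2 = d2 := Real.sq_sqrt hd2pos.le
  set s : ℝ := Real.sqrt m with hs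
  have hsm : s^2 = m := Real.sq_sqrt hmpos.le
  have hs_nonneg : 0 ≤ s := Real.sqrt_nonneg m
  -- s > 1/2 - c
  have hkey : (1/2 - c)^2 < m := by rw [hm, hc, hd2def]; nlinarith
  have hsc : 1/2 - c < s := by nlinarith [sq_nonneg (s - (1/2 - c))]
  have hcs_pos : 0 < (c + s)/2 := by linarith
  set x : ℝ := Real.sqrt ((c + s)/2) with hx
  have hx2 : x^2 = (c + s)/2 := Real.sq_sqrt hcs_pos.le
  have hx_nonneg : 0 ≤ x := Real.sqrt_nonneg _
  have hxhalf : 1/2 < x := by nlinarith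
  have hxne : x ≠ 0 := by linarith
  set y : ℝ := d/(2*x) with hy
  have h2xy : 2*x*y = d := by rw [hy]; field_simp
  have hsd : s^2 = c^2 + d2 := by rw [hsm, hm]
  have h1 : x^2 - y^2 = c := by
    have hy2 : y^2 * (4*x^2) = d2 := by
      rw [hy]; field_simp; linear_combination 4 * hd
    have hx2ne : (4*x^2 : ℝ) ≠ 0 := by positivity
    have h1mul : (x^2 - y^2)*(4*x^2) = c*(4*x^2) := by
      linear_combination (4*x^2 + 2*s - 2*c)*hx2 - hy2 + hsd
    exact mul_right_cancel₀ hx2ne h1mul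
  set w : ℂ := (x:ℂ) + (y:ℂ)*Complex.I with hw
  have hw2 : w^2 = (c:ℂ) + (d:ℂ)*Complex.I := by
    rw [hw]
    have hx1 : ((x:ℝ):ℂ)^2 - ((y:ℝ):ℂ)^2 = (c:ℂ) := by exact_mod_cast congrArg (Complex.ofReal) h1
    have hx3 : 2*((x:ℝ):ℂ)*((y:ℝ):ℂ) = (d:ℂ) := by exact_mod_cast congrArg (Complex.ofReal) h2xy
    linear_combination hx1 + Complex.I * hx3 + (y:ℂ)^2 * Complex.I_sq
  have hre : 64*(c^3-3*c*d^2)+784*(c^2-d^2)+3052*c+1491 = 0 := by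
    rw [hd, hc, hd2def]; linear_combination ht
  have him : 192*c^2 - 64*d^2 + 1568*c + 3052 = 0 := by
    rw [hd, hc, hd2def]; ring
  have hre' : (64*((c:ℂ)^3-3*(c:ℂ)*(d:ℂ)^2)+784*((c:ℂ)^2-(d:ℂ)^2)+3052*(c:ℂ)+1491 : ℂ) = 0 := by
    exact_mod_cast congrArg (Complex.ofReal) hre
  have him' : (192*(c:ℂ)^2 - 64*(d:ℂ)^2 + 1568*(c:ℂ) + 3052 : ℂ) = 0 := by
    exact_mod_cast congrArg (Complex.ofReal) him
  have hu : 64*((c:ℂ)+(d:ℂ)*Complex.I)^3 + 784*((c:ℂ)+(d:ℂ)*Complex.I)^2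
      + 3052*((c:ℂ)+(d:ℂ)*Complex.I) + 1491 = 0 := by
    linear_combination hre' + (d:ℂ)*Complex.I*him'
      + ((192*(c:ℂ)*(d:ℂ)^2 + 784*(d:ℂ)^2) + 64*(d:ℂ)^3*Complex.I) * Complex.I_sq
  have hsw : 64*w^6 + 784*w^4 + 3052*w^2 + 1491 = 0 := by
    linear_combination (64*((w^2)^2 + w^2*((c:ℂ)+(d:ℂ)*Complex.I) + ((c:ℂ)+(d:ℂ)*Complex.I)^2)
      + 784*(w^2 + ((c:ℂ)+(d:ℂ)*Complex.I)) + 3052) * hw2 + hu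
  refine ⟨-1/2 - w, eightCycle_key w hsw, ?_⟩
  have : (-1/2 - w).re = -1/2 - x := by
    rw [hw]; simp [Complex.sub_re, Complex.add_re, Complex.mul_re]
  rw [this]; linarith

theorem eightCycle_root_off_line :
    (∃ z : ℂ, eightCycleEhrhart.eval z = 0 ∧ z.re < -1) ∧
      ¬ (∀ z : ℂ, eightCycleEhrhart.eval z = 0 → z.re = -1/2) := by
  have hmain : ∃ z : ℂ, eightCycleEhrhart.eval z = 0 ∧ z.re < -1 := by
    have hcont : ContinuousOn (fun t : ℝ => 64*t^3+784*t^2+3052*t+1491)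
        (Set.Icc (-(57/100 : ℝ)) (-(567/1000 : ℝ))) := by fun_prop
    have hsub := intermediate_value_Ioo (by norm_num : (-(57/100 : ℝ)) ≤ -(567/1000 : ℝ)) hcont
    have h0 : (0:ℝ) ∈ Set.Ioo ((fun t : ℝ => 64*t^3+784*t^2+3052*t+1491) (-(57/100)))
        ((fun t : ℝ => 64*t^3+784*t^2+3052*t+1491) (-(567/1000))) := by
      constructor <;> norm_num
    obtain ⟨t, htm, hte⟩ := hsub h0
    exact eightCycle_aux t hte htm.1 htm.2
  refine ⟨hmain, ?_⟩
  intro hall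
  obtain ⟨z, hz, hzre⟩ := hmain
  have := hall z hz
  rw [this] at hzre
  norm_num at hzre
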